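/- Let (W,S) be a Coxeter system and (s_1,...,s_l) a sequence of simple reflections with Demazure product u = s_1 * ⋯ * s_l. For every w ∈ W with w ≤ u in Bruhat order, there exists a subexpression (γ_1,...,γ_l) of (s_1,...,s_l) with γ_1 ⋯ γ_l = w. -/

import Mathlib

namespace DBS
open CoxeterSystem
open scoped Classical

variable {B W : Type*} [Group W] {M : CoxeterMatrix B} (cs : CoxeterSystem M W)

/-- Bruhat order on a Coxeter group: `u ≤ w` iff some reduced word for `w`
has a subword with product `u`. -/
def bruhatLE (u w : W) : Prop :=
  ∃ ω : List B, cs.IsReduced ω ∧ cs.wordProd ω = w ∧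
    ∃ ω' : List B, ω'.Sublist ω ∧ cs.wordProd ω' = u

/-- Strict Bruhat order. -/
def bruhatLT (u w : W) : Prop := bruhatLE cs u w ∧ u ≠ w

/-- Demazure product `s * w = max{sw, w}` in Bruhat order. -/
noncomputable def demL (i : B) (w : W) : W :=
  if bruhatLT cs w (cs.simple i * w) then cs.simple i * w else w

/-- `s ▷ w = min{sw, w}` in Bruhat order. -/
noncomputable def minL (i : B) (w : W) : W :=
  if bruhatLT cs (cs.simple i * w) w then cs.simple i * w else w

/-- `w ◁ s = min{ws, w}` in Bruhat order. -/
noncomputable def demR (w : W) (i : B) : W :=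
  if bruhatLT cs (w * cs.simple i) w then w * cs.simple i else w

/-- Demazure product `s₁ * (s₂ * (⋯ * s_l))` of a word of simple reflections. -/
noncomputable def dprodWord (ω : List B) : W := ω.foldr (demL cs) 1

/-- Demazure product of the sequence of simple reflections indexed by `u`. -/
noncomputable def dprodFn {l : ℕ} (u : Fin l → B) : W := dprodWord cs (List.ofFn u)

/-- Partial product `γ^j = γ₁ ⋯ γ_j`. -/
noncomputable def pp {l : ℕ} (γ : Fin l → W) (j : ℕ) : W := ((List.ofFn γ).take j).prod

/-- `γ` is a subexpression of the word of simple reflections indexed by `u`. -/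
def IsSubexpr {l : ℕ} (u : Fin l → B) (γ : Fin l → W) : Prop :=
  ∀ j : Fin l, γ j = 1 ∨ γ j = cs.simple (u j)

/-- `γ` is a positive subexpression: `γ^{j-1} = γ^j ◁ s_j` for all `j`. -/
def IsPositive {l : ℕ} (u : Fin l → B) (γ : Fin l → W) : Prop :=
  ∀ j : Fin l, pp γ (j : ℕ) = demR cs (pp γ ((j : ℕ) + 1)) (u j)


section Dev

/-- Auxiliary monoid `(W → ZMod 2) ⋊ W` for counting inversions. -/
structure NMon (W : Type*) where
  fn : W → ZMod 2
  el : W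

namespace NMon

variable {W : Type*} [Group W]

instance : One (NMon W) := ⟨⟨fun _ => 0, 1⟩⟩
instance : Mul (NMon W) := ⟨fun x y => ⟨fun t => x.fn t + y.fn (x.el⁻¹ * t * x.el), x.el * y.el⟩⟩

@[simp] lemma one_fn : (1 : NMon W).fn = fun _ => 0 := rfl
@[simp] lemma one_el : (1 : NMon W).el = 1 := rfl
@[simp] lemma mul_fn (x y : NMon W) :
    (x * y).fn = fun t => x.fn t + y.fn (x.el⁻¹ * t * x.el) := rfl
@[simp] lemma mul_el (x y : NMon W) : (x * y).el = x.el * y.el := rfl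

instance : Monoid (NMon W) where
  mul_assoc x y z := by
    cases x; cases y; cases z
    show NMon.mk _ _ = NMon.mk _ _
    simp only [NMon.mk.injEq]
    refine ⟨funext fun t => ?_, by simp [mul_assoc]⟩
    simp [mul_assoc, add_assoc]
  one_mul x := by
    cases x
    show NMon.mk _ _ = NMon.mk _ _
    simp [NMon.mk.injEq]
  mul_one x := by
    cases x
    show NMon.mk _ _ = NMon.mk _ _
    simp [NMon.mk.injEq]

/-- Projection to `W` as a monoid hom. -/
def elHom (W : Type*) [Group W] : NMon W →* W where
  toFun := NMon.el
  map_one' := rfl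
  map_mul' _ _ := rfl

end NMon


local prefix:100 "s" => cs.simple

lemma simple_mul_pow_aux (a b : B) (k : ℕ) :
    s a * (s b * s a) ^ k = (s a * s b) ^ k * s a := by
  induction k with
  | zero => simp
  | succ k ih =>
    rw [pow_succ, ← mul_assoc, ← mul_assoc, ih, pow_succ]
    group

lemma simple_conj_pow_aux (a b : B) (k m : ℕ) :
    (s a * s b) ^ k * ((s a * s b) ^ m * s a) * ((s a * s b) ^ k)⁻¹
      = (s a * s b) ^ (m + 2 * k) * s a := by
  have h1 : ((s a * s b) ^ k)⁻¹ = (s b * s a) ^ k := by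
    rw [← inv_pow, mul_inv_rev, cs.inv_simple, cs.inv_simple]
  rw [h1]
  calc (s a * s b) ^ k * ((s a * s b) ^ m * s a) * (s b * s a) ^ k
      = (s a * s b) ^ (k + m) * (s a * (s b * s a) ^ k) := by
        rw [pow_add]; group
    _ = (s a * s b) ^ (k + m) * ((s a * s b) ^ k * s a) := by
        rw [simple_mul_pow_aux]
    _ = (s a * s b) ^ (m + 2 * k) * s a := by
        rw [← mul_assoc, ← pow_add]; ring_nf



lemma conj_eq_iff (a t x : W) : a⁻¹ * t * a = x ↔ t = a * x * a⁻¹ := by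
  constructor
  · rintro rfl; group
  · rintro rfl; group

lemma invol_conj_eq_iff {a : W} (ha : a * a = 1) (u x : W) :
    a * u * a = x ↔ u = a * x * a := by
  constructor
  · intro h
    rw [← h]
    symm
    calc a * (a * u * a) * a = (a * a) * u * (a * a) := by group
      _ = u := by rw [ha]; simp
  · intro h
    rw [h]
    calc a * (a * x * a) * a = (a * a) * x * (a * a) := by group
      _ = x := by rw [ha]; simp

lemma NMon.ext' {x y : NMon W} (h1 : x.fn = y.fn) (h2 : x.el = y.el) : x = y := by
  cases x; cases y; cases h1; cases h2; rfl

/-- The generator images in `NMon W`. -/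
noncomputable def nf (c : B) : NMon W :=
  ⟨fun t => if t = s c then 1 else 0, s c⟩

@[simp] lemma nf_el (c : B) : (nf cs c).el = s c := rfl
@[simp] lemma nf_fn (c : B) (t : W) : (nf cs c).fn t = if t = s c then 1 else 0 := rfl

lemma nf_pow_formula (a b : B) (k : ℕ) :
    (nf cs a * nf cs b) ^ k =
      ⟨fun t => ∑ n ∈ Finset.range (2 * k), (if t = (s a * s b) ^ n * s a then 1 else 0),
        (s a * s b) ^ k⟩ := by
  induction k with
  | zero =>
    refine NMon.ext' ?_ ?_ <;> simp
  | succ k ih =>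
    rw [pow_succ, ih]
    refine NMon.ext' (funext fun t => ?_) ?_
    swap
    · show (s a * s b) ^ k * (nf cs a * nf cs b).el = _
      rw [NMon.mul_el, nf_el, nf_el, ← mul_assoc, mul_assoc, ← pow_succ]
    dsimp only
    show _ + ((nf cs a * nf cs b).fn (((s a * s b) ^ k)⁻¹ * t * (s a * s b) ^ k)) = _
    have hab : (nf cs a * nf cs b).fn (((s a * s b) ^ k)⁻¹ * t * (s a * s b) ^ k)
        = (if t = (s a * s b) ^ (2 * k) * s a then 1 else 0)
          + (if t = (s a * s b) ^ (2 * k + 1) * s a then 1 else 0) := by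
      simp only [NMon.mul_fn, nf_fn, nf_el, cs.inv_simple]
      congr 1
      · apply if_congr _ rfl rfl
        rw [conj_eq_iff]
        have hx : (s a * s b) ^ k * s a * ((s a * s b) ^ k)⁻¹
            = (s a * s b) ^ (2 * k) * s a := by
          have := simple_conj_pow_aux cs a b k 0
          simpa using this
        rw [hx]
      · apply if_congr _ rfl rfl
        rw [invol_conj_eq_iff (cs.simple_mul_simple_self a), conj_eq_iff]
        have h2 : s a * s b * s a = (s a * s b) ^ 1 * s a := by rw [pow_one]
        rw [h2, simple_conj_pow_aux cs a b k 1, add_comm 1 (2 * k)]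
    rw [hab, show 2 * (k + 1) = 2 * k + 1 + 1 by ring]
    rw [Finset.sum_range_succ (fun n => if t = (s a * s b) ^ n * s a then (1 : ZMod 2) else 0)
      (2 * k + 1)]
    rw [Finset.sum_range_succ (fun n => if t = (s a * s b) ^ n * s a then (1 : ZMod 2) else 0)
      (2 * k)]
    ring

lemma nf_liftable : M.IsLiftable (nf cs) := by
  intro a b
  rw [nf_pow_formula]
  refine NMon.ext' (funext fun t => ?_) (cs.simple_mul_simple_pow a b)
  show _ = (0 : ZMod 2)
  dsimp only
  rw [two_mul, Finset.sum_range_add]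
  have hc : ∀ n ∈ Finset.range (M.M a b),
      (if t = (s a * s b) ^ (M.M a b + n) * s a then (1 : ZMod 2) else 0)
      = (if t = (s a * s b) ^ n * s a then 1 else 0) := by
    intro n _
    apply if_congr _ rfl rfl
    rw [add_comm, pow_add, cs.simple_mul_simple_pow, mul_one]
  rw [Finset.sum_congr rfl hc]
  exact (by decide : ∀ x : ZMod 2, x + x = 0) _


/-- The counting homomorphism `W →* NMon W`. -/
noncomputable def nphi : W →* NMon W := cs.lift ⟨nf cs, nf_liftable cs⟩

@[simp] lemma nphi_simple (c : B) : nphi cs (s c) = nf cs c :=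
  cs.lift_apply_simple (nf_liftable cs) c

@[simp] lemma nphi_el (w : W) : (nphi cs w).el = w := by
  have h : (NMon.elHom W).comp (nphi cs) = MonoidHom.id W := by
    apply cs.ext_simple
    intro i
    simp [NMon.elHom]
  calc (nphi cs w).el = ((NMon.elHom W).comp (nphi cs)) w := rfl
    _ = w := by rw [h]; rfl

local prefix:100 "ℓ" => cs.length
local prefix:100 "π" => cs.wordProd
local prefix:100 "lis" => cs.leftInvSeq

/-- The first component of `nphi` counts multiplicities in the left inversion sequence. -/
lemma nphi_count (ω : List B) (t : W) :
    (nphi cs (π ω)).fn t = (List.count t (lis ω) : ZMod 2) := by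
  induction ω generalizing t with
  | nil => simp [nphi]
  | cons c ω ih =>
    rw [cs.wordProd_cons, map_mul, nphi_simple]
    show (nf cs c).fn t + (nphi cs (π ω)).fn _ = _
    rw [nf_el, cs.inv_simple, ih]
    show _ + _ = (List.count t (s c :: List.map (⇑(MulAut.conj (s c))) (lis ω)) : ZMod 2)
    rw [List.count_cons]
    have hmap : List.count t (List.map (⇑(MulAut.conj (s c))) (lis ω))
        = List.count (s c * t * s c) (lis ω) := by
      have hinj : Function.Injective (⇑(MulAut.conj (s c))) := (MulAut.conj (s c)).injective
      have : t = (MulAut.conj (s c)) (s c * t * s c) := by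
        simp [MulAut.conj_apply, mul_assoc]
      rw [this, List.count_map_of_injective _ _ hinj]
      congr 1
      rw [← this]
    rw [hmap]
    push_cast
    rw [nf_fn]
    by_cases h : t = s c
    · subst h
      simp [add_comm]
    · have h' : ¬ (s c = t) := fun hh => h hh.symm
      simp [h, h']

/-- `N t t = 1` for any reflection `t`. -/
lemma nphi_self_of_isReflection {t : W} (ht : cs.IsReflection t) :
    (nphi cs t).fn t = 1 := by
  obtain ⟨w, c, rfl⟩ := ht
  set t := w * s c * w⁻¹ with hts
  have hinv : ∀ y, (nphi cs w⁻¹).fn y = (nphi cs w).fn (w * y * w⁻¹) := by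
    intro y
    have h1 : nphi cs w * nphi cs w⁻¹ = 1 := by
      rw [← map_mul, mul_inv_cancel, map_one]
    have h2 : (nphi cs w * nphi cs w⁻¹).fn (w * y * w⁻¹) = 0 := by rw [h1]; rfl
    rw [NMon.mul_fn] at h2
    dsimp only at h2
    rw [nphi_el] at h2
    have h3 : w⁻¹ * (w * y * w⁻¹) * w = y := by group
    rw [h3] at h2
    have h4 := eq_neg_of_add_eq_zero_right h2
    rw [h4]
    exact (by decide : ∀ x : ZMod 2, -x = x) _
  have hexp : nphi cs t = nphi cs w * nf cs c * nphi cs w⁻¹ := by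
    rw [hts, map_mul, map_mul, nphi_simple]
  rw [hexp]
  rw [NMon.mul_fn, NMon.mul_fn]
  dsimp only
  rw [NMon.mul_el, nphi_el, nf_el]
  have e1 : w⁻¹ * t * w = s c := by rw [hts]; simp [mul_assoc]
  have e2 : (w * s c)⁻¹ * t * (w * s c) = s c := by
    rw [hts, mul_inv_rev, cs.inv_simple]
    simp [mul_assoc, cs.simple_mul_simple_cancel_left]
  rw [e1, e2, nf_fn, if_pos rfl, hinv]
  have e3 : w * s c * w⁻¹ = t := hts.symm
  rw [e3]
  have h22 : ∀ x : ZMod 2, x + x = 0 := by decide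
  calc ((nphi cs) w).fn t + 1 + ((nphi cs) w).fn t
      = (((nphi cs) w).fn t + ((nphi cs) w).fn t) + 1 := by ring
    _ = 1 := by rw [h22]; rw [zero_add]


/-- Strong exchange property (left version). -/
theorem strong_exchange {t w : W} (ht : cs.IsReflection t) (hlt : ℓ (t * w) < ℓ w)
    {ω : List B} (hred : cs.IsReduced ω) (hw : π ω = w) :
    ∃ k < ω.length, π (ω.eraseIdx k) = t * w := by
  by_cases hmem : t ∈ lis ω
  · obtain ⟨j, hj, hje⟩ := List.mem_iff_getElem.mp hmem
    refine ⟨j, by simpa using hj, ?_⟩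
    have h1 := cs.getD_leftInvSeq_mul_wordProd ω j
    rw [List.getD_eq_getElem _ 1 hj, hje, hw] at h1
    exact h1.symm
  · exfalso
    obtain ⟨τ, hτred, hτw⟩ := cs.exists_reduced_word' (t * w)
    have h0 : (nphi cs w).fn t = 0 := by
      rw [← hw, nphi_count, List.count_eq_zero.mpr hmem]
      rfl
    have h1 : (nphi cs (t * w)).fn t = 1 := by
      rw [map_mul, NMon.mul_fn]
      dsimp only
      rw [nphi_el]
      have e1 : t⁻¹ * t * t = t := by group
      rw [e1, h0, nphi_self_of_isReflection cs ht, add_zero]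
    have hmem2 : t ∈ lis τ := by
      by_contra hmem2
      rw [hτw, nphi_count, List.count_eq_zero.mpr hmem2] at h1
      exact absurd h1 (by decide)
    have h2 := cs.isLeftInversion_of_mem_leftInvSeq hτred hmem2
    rw [← hτw] at h2
    have h3 : t * (t * w) = w := by rw [← mul_assoc, ht.mul_self, one_mul]
    have h4 := h2.2
    rw [h3] at h4
    omega


/-- Deletion: every word has a reduced sublist with the same product. -/
theorem exists_reduced_sublist (ω : List B) :
    ∃ σ : List B, σ.Sublist ω ∧ cs.IsReduced σ ∧ π σ = π ω := by
  generalize hn : ω.length = n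
  induction n using Nat.strong_induction_on generalizing ω with
  | _ n IH =>
  subst hn
  by_cases hred : cs.IsReduced ω
  · exact ⟨ω, List.Sublist.refl ω, hred, rfl⟩
  · have hnil : cs.IsReduced ([] : List B) := by
      show ℓ (π ([] : List B)) = _
      simp
    have hP : ∃ j, cs.IsReduced (ω.drop j) := ⟨ω.length, by
      rw [List.drop_eq_nil_of_le (le_refl _)]
      exact hnil⟩
    classical
    obtain ⟨j, hPj, hmin⟩ : ∃ j, cs.IsReduced (ω.drop j) ∧
        ∀ i, i < j → ¬ cs.IsReduced (ω.drop i) :=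
      ⟨Nat.find hP, Nat.find_spec hP, fun i hi => Nat.find_min hP hi⟩
    obtain _ | j' := j
    · exact absurd (by simpa using hPj) hred
    have hPj' : ¬ cs.IsReduced (ω.drop j') := hmin j' (by omega)
    have hj'len : j' < ω.length := by
      by_contra h
      rw [List.drop_eq_nil_of_le (by omega)] at hPj'
      exact hPj' hnil
    have hdropj' : ω.drop j' = ω[j'] :: ω.drop (j' + 1) := List.drop_eq_getElem_cons hj'len
    set c := ω[j'] with hc
    set u := π (ω.drop (j' + 1)) with hu
    have hπdrop : π (ω.drop j') = s c * u := by rw [hdropj', cs.wordProd_cons]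
    have hlen : ℓ (s c * u) < ℓ u := by
      rcases cs.length_simple_mul u c with h | h
      · exfalso
        apply hPj'
        show ℓ (π (ω.drop j')) = _
        rw [hπdrop, h, hdropj']
        simp only [List.length_cons]
        rw [hPj]
      · omega
    obtain ⟨k, hk, hke⟩ := strong_exchange cs (cs.isReflection_simple c) hlen hPj rfl
    set σ' := ω.take j' ++ (ω.drop (j' + 1)).eraseIdx k with hσ'
    have hπσ' : π σ' = π ω := by
      rw [hσ', cs.wordProd_append, hke]
      conv_rhs => rw [← List.take_append_drop j' ω]
      rw [cs.wordProd_append, hπdrop]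
    have hσ'sub : σ'.Sublist ω := by
      have h1 : ((ω.drop (j' + 1)).eraseIdx k).Sublist (ω.drop (j' + 1)) :=
        List.eraseIdx_sublist _ k
      have h2 : ((ω.drop (j' + 1)).eraseIdx k).Sublist (ω.drop j') := by
        rw [hdropj']
        exact h1.trans (List.sublist_cons_self _ _)
      have h3 := h2.append_left (ω.take j')
      rw [List.take_append_drop] at h3
      exact h3
    have hσ'len : σ'.length < ω.length := by
      have h5 : ((ω.drop (j' + 1)).eraseIdx k).length + 1 = (ω.drop (j' + 1)).length :=
        List.length_eraseIdx_add_one hk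
      have h6 : (ω.drop (j' + 1)).length = ω.length - (j' + 1) := by
        rw [List.length_drop]
      rw [hσ', List.length_append, List.length_take]
      omega
    obtain ⟨σ, hsub, hsred, hsprod⟩ := IH σ'.length hσ'len σ' rfl
    exact ⟨σ, hsub.trans hσ'sub, hsred, by rw [hsprod, hπσ']⟩


/-- One step of the (left) Bruhat chain order. -/
def chainStep (a b : W) : Prop := ∃ t, cs.IsReflection t ∧ b = t * a ∧ ℓ a < ℓ b

/-- The chain order (reflexive-transitive closure). -/
def chainLE : W → W → Prop := Relation.ReflTransGen (chainStep cs)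

lemma chainLE_length {a b : W} (h : chainLE cs a b) : ℓ a ≤ ℓ b := by
  induction h with
  | refl => exact le_refl _
  | tail _ hstep ih =>
    obtain ⟨t, _, _, hlt⟩ := hstep
    omega

/-- The diamond lemma. -/
lemma diamond (c : B) {t y z : W} (ht : cs.IsReflection t) (hz : z = t * y)
    (hcov : ℓ z = ℓ y + 1) (hdz : ℓ (s c * z) < ℓ z) (hay : ℓ y < ℓ (s c * y)) :
    s c * y = z := by
  obtain ⟨ξ, hξred, hξw⟩ := cs.exists_reduced_word' (s c * z)
  have hζprod : π (c :: ξ) = z := by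
    rw [cs.wordProd_cons, ← hξw, cs.simple_mul_simple_cancel_left]
  have hsczlen : ℓ (s c * z) + 1 = ℓ z := by
    rcases cs.length_simple_mul z c with h | h
    · omega
    · exact h
  have hζred : cs.IsReduced (c :: ξ) := by
    show ℓ (π (c :: ξ)) = _
    rw [hζprod, List.length_cons, ← hξred, ← hξw]
    omega
  have htz : ℓ (t * z) < ℓ z := by
    have h1 : t * z = y := by rw [hz, ← mul_assoc, ht.mul_self, one_mul]
    rw [h1]
    omega
  obtain ⟨k, hk, hke⟩ := strong_exchange cs ht htz hζred hζprod
  have hty : t * z = y := by rw [hz, ← mul_assoc, ht.mul_self, one_mul]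
  rw [hty] at hke
  match k, hk with
  | 0, _ =>
    have h1 : (c :: ξ).eraseIdx 0 = ξ := rfl
    rw [h1] at hke
    rw [← hke, ← hξw, cs.simple_mul_simple_cancel_left]
  | (k' + 1), hk =>
    exfalso
    have h1 : (c :: ξ).eraseIdx (k' + 1) = c :: ξ.eraseIdx k' := rfl
    rw [h1, cs.wordProd_cons] at hke
    have h2 : s c * y = π (ξ.eraseIdx k') := by
      rw [← hke, cs.simple_mul_simple_cancel_left]
    have h3 : ℓ (s c * y) ≤ (ξ.eraseIdx k').length := by
      rw [h2]; exact cs.length_wordProd_le _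
    have h4 : k' < ξ.length := by simpa using hk
    have h5 : (ξ.eraseIdx k').length + 1 = ξ.length := List.length_eraseIdx_add_one h4
    have h6 : ℓ (π ξ) = ξ.length := hξred
    rw [← hξw] at h6
    omega

/-- The lifting property for the chain order. -/
lemma chain_lift (c : B) {v : W} (hv : ℓ v < ℓ (s c * v)) :
    ∀ y, chainLE cs y v → chainLE cs (s c * y) (s c * v) := by
  have stepv : chainStep cs v (s c * v) :=
    ⟨s c, cs.isReflection_simple c, rfl, hv⟩
  have main : ∀ d y, chainLE cs y v → ℓ v - ℓ y = d → chainLE cs (s c * y) (s c * v) := by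
    intro d
    induction d using Nat.strong_induction_on with
    | _ d IH =>
    intro y hyv hd
    by_cases hsy : ℓ (s c * y) < ℓ y
    · -- easy case: s c * y < y
      have step1 : chainStep cs (s c * y) y :=
        ⟨s c, cs.isReflection_simple c, (cs.simple_mul_simple_cancel_left _).symm, hsy⟩
      exact Relation.ReflTransGen.head step1 (hyv.tail stepv)
    · have hsy' : ℓ y < ℓ (s c * y) := by
        rcases cs.length_simple_mul y c with h | h <;> omega
      rcases Relation.ReflTransGen.cases_head hyv with rfl | ⟨z, hstep, hzv⟩
      · exact Relation.ReflTransGen.refl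
      obtain ⟨t, ht, hz, hlt⟩ := hstep
      have hzle : ℓ z ≤ ℓ v := chainLE_length cs hzv
      have IH' : chainLE cs (s c * z) (s c * v) :=
        IH (ℓ v - ℓ z) (by omega) z hzv rfl
      have ht' : cs.IsReflection (s c * t * s c) := by
        have := ht.conj (s c)
        rwa [cs.inv_simple] at this
      have hconj : s c * z = (s c * t * s c) * (s c * y) := by
        rw [hz]
        calc s c * (t * y) = s c * t * y := by rw [mul_assoc]
          _ = s c * t * (s c * (s c * y)) := by rw [cs.simple_mul_simple_cancel_left]
          _ = s c * t * s c * (s c * y) := by group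
      by_cases hcmp : ℓ (s c * y) < ℓ (s c * z)
      · exact Relation.ReflTransGen.head ⟨s c * t * s c, ht', hconj, hcmp⟩ IH'
      · have hne : ℓ (s c * z) ≠ ℓ (s c * y) := by
          rw [hconj]
          exact ht'.length_mul_right_ne _
        have hcmp' : ℓ (s c * z) < ℓ (s c * y) := by omega
        have h1 : ℓ (s c * y) = ℓ y + 1 := by
          rcases cs.length_simple_mul y c with h | h <;> omega
        have h2 : ℓ (s c * z) + 1 = ℓ z := by
          rcases cs.length_simple_mul z c with h | h
          · omega
          · exact h
        have hcov : ℓ z = ℓ y + 1 := by omega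
        have heq : s c * y = z := diamond cs c ht hz hcov (by omega) hsy'
        rw [heq]
        exact hzv.tail stepv
  intro y hyv
  exact main (ℓ v - ℓ y) y hyv rfl

/-- Subwords of reduced words are below in the chain order. -/
theorem sublist_chainLE : ∀ {ρ ρ' : List B}, ρ'.Sublist ρ → cs.IsReduced ρ →
    chainLE cs (π ρ') (π ρ) := by
  intro ρ ρ' h
  induction h with
  | slnil => intro _; exact Relation.ReflTransGen.refl
  | @cons l₁ l₂ c h ih =>
    intro hred
    have hred₂ : cs.IsReduced l₂ := by
      have := CoxeterSystem.IsReduced.drop (ω := c :: l₂) hred 1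
      simpa using this
    have h1 := ih hred₂
    have step : chainStep cs (π l₂) (π (c :: l₂)) := by
      refine ⟨s c, cs.isReflection_simple c, cs.wordProd_cons c l₂, ?_⟩
      rw [hred₂, hred]
      simp
    exact h1.tail step
  | @cons_cons l₁ l₂ c h ih =>
    intro hred
    have hred₂ : cs.IsReduced l₂ := by
      have := CoxeterSystem.IsReduced.drop (ω := c :: l₂) hred 1
      simpa using this
    have h1 := ih hred₂
    rw [cs.wordProd_cons, cs.wordProd_cons]
    by_cases hcase : ℓ (s c * π l₁) < ℓ (π l₁)
    · have step1 : chainStep cs (s c * π l₁) (π l₁) :=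
        ⟨s c, cs.isReflection_simple c, (cs.simple_mul_simple_cancel_left _).symm, hcase⟩
      have step2 : chainStep cs (π l₂) (s c * π l₂) := by
        refine ⟨s c, cs.isReflection_simple c, rfl, ?_⟩
        have : ℓ (π (c :: l₂)) = l₂.length + 1 := by rw [hred]; simp
        rw [cs.wordProd_cons] at this
        rw [hred₂, this]
        omega
      exact Relation.ReflTransGen.head step1 (h1.tail step2)
    · have hasc : ℓ (π l₂) < ℓ (s c * π l₂) := by
        have : ℓ (π (c :: l₂)) = l₂.length + 1 := by rw [hred]; simp
        rw [cs.wordProd_cons] at this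
        rw [hred₂, this]
        omega
      exact chain_lift cs c hasc _ h1

/-- Chain order implies subword of every reduced word. -/
theorem chainLE_subword {x z : W} (h : chainLE cs x z) :
    ∀ {ζ : List B}, cs.IsReduced ζ → π ζ = z → ∃ σ : List B, σ.Sublist ζ ∧ π σ = x := by
  induction h with
  | refl => intro ζ _ hζ; exact ⟨ζ, List.Sublist.refl _, hζ⟩
  | @tail b z' _ hstep ih =>
    intro ζ hζred hζ
    obtain ⟨t, ht, hb, hlt⟩ := hstep
    have htb : t * z' = b := by rw [hb, ← mul_assoc, ht.mul_self, one_mul]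
    have hlen : ℓ (t * z') < ℓ z' := by rw [htb]; omega
    obtain ⟨k, hk, hke⟩ := strong_exchange cs ht hlen hζred hζ
    rw [htb] at hke
    obtain ⟨σ₁, hσ₁sub, hσ₁red, hσ₁prod⟩ := exists_reduced_sublist cs (ζ.eraseIdx k)
    rw [hke] at hσ₁prod
    obtain ⟨σ, hσsub, hσprod⟩ := ih hσ₁red hσ₁prod
    exact ⟨σ, (hσsub.trans hσ₁sub).trans (List.eraseIdx_sublist ζ k), hσprod⟩


/-- The Demazure product of a word has a reduced word which is a sublist of the word. -/
lemma exists_dprod_reduced_sublist (ω : List B) :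
    ∃ ρ₀ : List B, ρ₀.Sublist ω ∧ cs.IsReduced ρ₀ ∧ π ρ₀ = dprodWord cs ω := by
  induction ω with
  | nil =>
    refine ⟨[], List.Sublist.refl _, ?_, ?_⟩
    · show ℓ (π ([] : List B)) = _
      simp
    · rfl
  | cons i ω ih =>
    obtain ⟨ρ₀, hsub, hred, hprod⟩ := ih
    have hd : dprodWord cs (i :: ω) = demL cs i (dprodWord cs ω) := rfl
    by_cases hbr : bruhatLT cs (dprodWord cs ω) (cs.simple i * dprodWord cs ω)
    · have hdem : demL cs i (dprodWord cs ω) = cs.simple i * dprodWord cs ω := if_pos hbr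
      have hlen : ℓ (dprodWord cs ω) < ℓ (cs.simple i * dprodWord cs ω) := by
        obtain ⟨⟨τ, hτred, hτprod, τ', hτ'sub, hτ'prod⟩, hne⟩ := hbr
        have h1 : ℓ (dprodWord cs ω) ≤ τ'.length := by
          rw [← hτ'prod]
          exact cs.length_wordProd_le _
        have h2 : τ'.length ≤ τ.length := hτ'sub.length_le
        have h3 : τ.length = ℓ (cs.simple i * dprodWord cs ω) := by
          rw [← hτprod]
          exact hτred.symm
        rcases cs.length_simple_mul (dprodWord cs ω) i with h | h
        · omega
        · exfalso
          have h4 := cs.length_simple_mul_ne (dprodWord cs ω) i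
          omega
      refine ⟨i :: ρ₀, hsub.cons₂ i, ?_, ?_⟩
      · show ℓ (π (i :: ρ₀)) = _
        rw [cs.wordProd_cons, hprod, List.length_cons]
        have h5 : ℓ (cs.simple i * dprodWord cs ω) = ℓ (dprodWord cs ω) + 1 := by
          rcases cs.length_simple_mul (dprodWord cs ω) i with h | h <;> omega
        rw [h5, ← hprod, hred]
      · rw [cs.wordProd_cons, hprod, hd, hdem]
    · have hdem : demL cs i (dprodWord cs ω) = dprodWord cs ω := if_neg hbr
      exact ⟨ρ₀, hsub.cons i, hred, by rw [hprod, hd, hdem]⟩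

/-- Main combinatorial form: any `w` Bruhat-below the Demazure product of `ω`
is the product of a sublist of `ω`. -/
theorem exists_sublist_prod (ω : List B) (w : W) (hw : bruhatLE cs w (dprodWord cs ω)) :
    ∃ σ : List B, σ.Sublist ω ∧ π σ = w := by
  obtain ⟨ρ, hρred, hρprod, ρ', hρ'sub, hρ'prod⟩ := hw
  have hchain : chainLE cs w (dprodWord cs ω) := by
    have h1 := sublist_chainLE cs hρ'sub hρred
    rwa [hρ'prod, hρprod] at h1
  obtain ⟨ρ₀, hρ₀sub, hρ₀red, hρ₀prod⟩ := exists_dprod_reduced_sublist cs ω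
  obtain ⟨σ, hσsub, hσprod⟩ := chainLE_subword cs hchain hρ₀red hρ₀prod
  exact ⟨σ, hσsub.trans hρ₀sub, hσprod⟩

/-- Convert a sublist to a mask. -/
lemma sublist_mask : ∀ {σ τ : List B}, σ.Sublist τ →
    ∃ γ : List W, List.Forall₂ (fun g c => g = 1 ∨ g = s c) γ τ ∧ γ.prod = π σ := by
  intro σ τ h
  induction h with
  | slnil => exact ⟨[], List.Forall₂.nil, by simp⟩
  | @cons l₁ l₂ c h ih =>
    obtain ⟨γ, hγ, hprod⟩ := ih
    exact ⟨(1 : W) :: γ, List.Forall₂.cons (Or.inl rfl) hγ, by simp [hprod]⟩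
  | @cons_cons l₁ l₂ c h ih =>
    obtain ⟨γ, hγ, hprod⟩ := ih
    refine ⟨s c :: γ, List.Forall₂.cons (Or.inr rfl) hγ, ?_⟩
    rw [List.prod_cons, hprod, cs.wordProd_cons]


end Dev

/-- Every `w ≤ s_1 * ⋯ * s_l` (Demazure product, Bruhat order) is the product of
some subexpression of `(s_1, …, s_l)`. -/
theorem exists_subexpr_prod {l : ℕ} (u : Fin l → B) (w : W)
    (hw : bruhatLE cs w (dprodFn cs u)) :
    ∃ γ : Fin l → W, IsSubexpr cs u γ ∧ (List.ofFn γ).prod = w := by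
  have hw' : bruhatLE cs w (dprodWord cs (List.ofFn u)) := hw
  obtain ⟨σ, hσsub, hσprod⟩ := exists_sublist_prod cs (List.ofFn u) w hw'
  obtain ⟨γl, hγf, hγprod⟩ := sublist_mask cs hσsub
  have hlen : γl.length = l := by
    have h := hγf.length_eq
    simpa using h
  refine ⟨fun j => γl.get ⟨(j : ℕ), by rw [hlen]; exact j.2⟩, ?_, ?_⟩
  · intro j
    have h := List.forall₂_iff_get.mp hγf
    have h2 := h.2 (j : ℕ) (by rw [hlen]; exact j.2) (by simp)
    simpa [List.get_ofFn] using h2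
  · have hofn : List.ofFn (fun j : Fin l =>
        γl.get ⟨(j : ℕ), by rw [hlen]; exact j.2⟩) = γl := by
      apply List.ext_get (by simp [hlen])
      intro n h1 h2
      simp [List.get_ofFn]
    rw [hofn, hγprod, hσprod]

end DBS
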